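/- For the pentablock 𝒫 = { (a,s,p) ∈ ℂ³ : (s,p) ∈ 𝔾₂ and |a| < |1 − (½ s β̄)/(1 + √(1−|β|²))| }, where β = (s − s̄p)/(1−|p|²), the maps θ : 𝔾₂ → 𝒫, (s,p) ↦ (0,s,p), and ι : 𝒫 → 𝔾₂, (a,s,p) ↦ (s,p), are well-defined with ι ∘ θ = id; hence the symmetrized bidisc 𝔾₂ is an analytic retract of 𝒫. -/

import Mathlib

open Complex Metric

/-- The symmetrized bidisc `𝔾₂ = {(z+w, zw) : z, w ∈ 𝔻}`. -/
def SymBidisc : Set (ℂ × ℂ) :=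
  {x | ∃ z w : ℂ, ‖z‖ < 1 ∧ ‖w‖ < 1 ∧ x = (z + w, z * w)}

/-- The quantity `β(s,p) = (s - s̄ p)/(1 - |p|²)`. -/
noncomputable def pentaBeta (s p : ℂ) : ℂ :=
  (s - (starRingEnd ℂ) s * p) / ((1 : ℂ) - (‖p‖ ^ 2 : ℝ))

/-- The pentablock `𝒫`. -/
noncomputable def Pentablock : Set (ℂ × ℂ × ℂ) :=
  {x | (x.2.1, x.2.2) ∈ SymBidisc ∧
    ‖x.1‖ <
      ‖(1 - ((1 / 2 : ℂ) * x.2.1 * (starRingEnd ℂ) (pentaBeta x.2.1 x.2.2)) /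
        ((1 : ℂ) + (Real.sqrt (1 - ‖pentaBeta x.2.1 x.2.2‖ ^ 2) : ℝ)))‖}

lemma pentaBeta_abs_le_one {s p : ℂ} (h : (s, p) ∈ SymBidisc) :
    ‖pentaBeta s p‖ ≤ 1 := by
  obtain ⟨z, w, hz, hw, hx⟩ := h
  obtain ⟨hs, hp⟩ := Prod.mk.injEq .. ▸ hx
  subst hs; subst hp
  have hz0 : 0 ≤ ‖z‖ := norm_nonneg z
  have hw0 : 0 ≤ ‖w‖ := norm_nonneg w
  have hnum : (z + w) - (starRingEnd ℂ) (z + w) * (z * w)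
      = z * (1 - (starRingEnd ℂ) w * w) + w * (1 - (starRingEnd ℂ) z * z) := by
    simp only [map_add]; ring
  have habs1 : ‖(1 - (starRingEnd ℂ) w * w)‖ = 1 - ‖w‖ ^ 2 := by
    have : (1 : ℂ) - (starRingEnd ℂ) w * w = ((1 - ‖w‖ ^ 2 : ℝ) : ℂ) := by
      rw [mul_comm, Complex.mul_conj]
      push_cast [Complex.sq_norm]
      ring
    rw [this, Complex.norm_real, Real.norm_eq_abs]
    exact abs_of_nonneg (by nlinarith)
  have habs2 : ‖(1 - (starRingEnd ℂ) z * z)‖ = 1 - ‖z‖ ^ 2 := by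
    have : (1 : ℂ) - (starRingEnd ℂ) z * z = ((1 - ‖z‖ ^ 2 : ℝ) : ℂ) := by
      rw [mul_comm, Complex.mul_conj]
      push_cast [Complex.sq_norm]
      ring
    rw [this, Complex.norm_real, Real.norm_eq_abs]
    exact abs_of_nonneg (by nlinarith)
  have hnumle : ‖((z + w) - (starRingEnd ℂ) (z + w) * (z * w))‖
      ≤ ‖z‖ * (1 - ‖w‖ ^ 2) + ‖w‖ * (1 - ‖z‖ ^ 2) := by
    rw [hnum]
    calc ‖(z * (1 - (starRingEnd ℂ) w * w) + w * (1 - (starRingEnd ℂ) z * z))‖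
        ≤ ‖(z * (1 - (starRingEnd ℂ) w * w))‖
          + ‖(w * (1 - (starRingEnd ℂ) z * z))‖ := norm_add_le _ _
      _ = ‖z‖ * (1 - ‖w‖ ^ 2) + ‖w‖ * (1 - ‖z‖ ^ 2) := by
          rw [norm_mul, norm_mul, habs1, habs2]
  have hden : ((1 : ℂ) - (‖(z * w)‖ ^ 2 : ℝ))
      = ((1 - ‖(z * w)‖ ^ 2 : ℝ) : ℂ) := by push_cast; ring
  have hpw : ‖(z * w)‖ = ‖z‖ * ‖w‖ := norm_mul _ _
  have hab : ‖z‖ * ‖w‖ < 1 :=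
    lt_of_le_of_lt (mul_le_of_le_one_right hz0 hw.le) hz
  have hab0 : 0 ≤ ‖z‖ * ‖w‖ := mul_nonneg hz0 hw0
  have hdpos : 0 < 1 - ‖(z * w)‖ ^ 2 := by rw [hpw]; nlinarith
  rw [pentaBeta, norm_div, hden, Complex.norm_real, Real.norm_eq_abs, abs_of_pos hdpos,
    div_le_one hdpos]
  calc ‖((z + w) - (starRingEnd ℂ) (z + w) * (z * w))‖
      ≤ ‖z‖ * (1 - ‖w‖ ^ 2) + ‖w‖ * (1 - ‖z‖ ^ 2) :=
        hnumle
    _ ≤ 1 - ‖(z * w)‖ ^ 2 := by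
        rw [hpw]
        nlinarith [mul_nonneg (mul_nonneg (sub_nonneg.2 hab.le)
          (sub_nonneg.2 hz.le)) (sub_nonneg.2 hw.le)]

lemma key_pos {s p : ℂ} (h : (s, p) ∈ SymBidisc) :
    0 < ‖(1 - ((1 / 2 : ℂ) * s * (starRingEnd ℂ) (pentaBeta s p)) /
        ((1 : ℂ) + (Real.sqrt (1 - ‖pentaBeta s p‖ ^ 2) : ℝ)))‖ := by
  have hβ := pentaBeta_abs_le_one h
  have hs2 : ‖s‖ < 2 := by
    obtain ⟨z, w, hz, hw, hx⟩ := h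
    obtain ⟨hs, hp⟩ := Prod.mk.injEq .. ▸ hx
    subst hs
    calc ‖(z + w)‖ ≤ ‖z‖ + ‖w‖ := norm_add_le _ _
      _ < 2 := by linarith
  set r := Real.sqrt (1 - ‖pentaBeta s p‖ ^ 2) with hr
  have hr0 : 0 ≤ r := Real.sqrt_nonneg _
  have hdenabs : ‖((1 : ℂ) + (r : ℂ))‖ = 1 + r := by
    have : (1 : ℂ) + (r : ℂ) = ((1 + r : ℝ) : ℂ) := by push_cast; ring
    rw [this, Complex.norm_real, Real.norm_eq_abs]
    exact abs_of_nonneg (by linarith)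
  have hq : ‖(((1 / 2 : ℂ) * s * (starRingEnd ℂ) (pentaBeta s p)) /
      ((1 : ℂ) + (r : ℂ)))‖ < 1 := by
    rw [norm_div, hdenabs, div_lt_one (by linarith)]
    have : ‖((1 / 2 : ℂ) * s * (starRingEnd ℂ) (pentaBeta s p))‖
        = (1 / 2) * ‖s‖ * ‖pentaBeta s p‖ := by
      rw [norm_mul, norm_mul, Complex.norm_conj]
      norm_num
    rw [this]
    have h0s : 0 ≤ ‖s‖ := norm_nonneg s
    nlinarith [norm_nonneg (pentaBeta s p)]
  rw [norm_pos_iff]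
  intro hcon
  have : ((1 / 2 : ℂ) * s * (starRingEnd ℂ) (pentaBeta s p)) /
      ((1 : ℂ) + (r : ℂ)) = 1 := by linear_combination -hcon
  rw [this] at hq
  simp at hq

/-- The symmetrized bidisc `𝔾₂` is an analytic retract of the pentablock `𝒫` via
`θ(s,p) = (0,s,p)` and `ι(a,s,p) = (s,p)`. -/
theorem symBidisc_analytic_retract_pentablock :
    ∃ (θ : ℂ × ℂ → ℂ × ℂ × ℂ) (ι : ℂ × ℂ × ℂ → ℂ × ℂ),
      (∀ x : ℂ × ℂ, θ x = (0, x.1, x.2)) ∧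
      (∀ y : ℂ × ℂ × ℂ, ι y = (y.2.1, y.2.2)) ∧
      Set.MapsTo θ SymBidisc Pentablock ∧
      Set.MapsTo ι Pentablock SymBidisc ∧
      DifferentiableOn ℂ θ SymBidisc ∧
      DifferentiableOn ℂ ι Pentablock ∧
      ∀ x ∈ SymBidisc, ι (θ x) = x := by
  refine ⟨fun x => (0, x.1, x.2), fun y => (y.2.1, y.2.2),
    fun x => rfl, fun y => rfl, ?_, ?_, ?_, ?_, fun x _ => rfl⟩
  · intro x hx
    refine ⟨hx, ?_⟩
    simpa using key_pos (s := x.1) (p := x.2) hx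
  · intro y hy
    exact hy.1
  · exact (differentiable_const (0 : ℂ)).prodMk
      ((differentiable_fst.prodMk differentiable_snd)) |>.differentiableOn
  · exact ((differentiable_snd.fst.prodMk differentiable_snd.snd)).differentiableOn
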